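/- Let C: f = 0 be a free divisor of degree d which is not a pencil of lines, with exponents d_1 ≤ d_2. Then mdr(f) = d_1, ct(f) = d + d_1 − 2 and st(f) = d + d_2 − 3. -/

import Mathlib

open MvPolynomial

noncomputable section

/-- The polynomial ring `S = ℂ[x,y,z]`. -/
abbrev S3 : Type := MvPolynomial (Fin 3) ℂ

/-- The Jacobian ideal of `f`, generated by the three partial derivatives. -/
def jacobianIdeal (f : S3) : Ideal S3 :=
  Ideal.span {pderiv 0 f, pderiv 1 f, pderiv 2 f}

/-- The dimension `m(f)_k` of the degree `k` homogeneous component of the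
Milnor algebra `M(f) = S/J_f`. -/
def milnorDim (f : S3) (k : ℕ) : ℕ :=
  Module.finrank ℂ (Submodule.map (Ideal.Quotient.mkₐ ℂ (jacobianIdeal f)).toLinearMap
    (homogeneousSubmodule (Fin 3) ℂ k))

/-- The `S`-linear map `(a,b,c) ↦ a f_x + b f_y + c f_z`. -/
def relMap (f : S3) : (Fin 3 → S3) →ₗ[S3] S3 where
  toFun ρ := ∑ i, ρ i * pderiv i f
  map_add' a b := by simp [add_mul, Finset.sum_add_distrib]
  map_smul' c a := by simp [Finset.mul_sum, mul_assoc]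

/-- The module `AR(f)` of all relations among the partial derivatives of `f`. -/
def AR (f : S3) : Submodule S3 (Fin 3 → S3) := LinearMap.ker (relMap f)

/-- The degree `m` graded piece `AR(f)_m`, as a `ℂ`-subspace of `S³`. -/
def ARgr (f : S3) (m : ℕ) : Submodule ℂ (Fin 3 → S3) :=
  (LinearMap.ker ((relMap f).restrictScalars ℂ)) ⊓
    Submodule.pi Set.univ (fun _ => homogeneousSubmodule (Fin 3) ℂ m)

/-- `ar(f)_m = dim_ℂ AR(f)_m`. -/
def arDim (f : S3) (m : ℕ) : ℕ := Module.finrank ℂ (ARgr f m)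

/-- A vector of polynomials is homogeneous of degree `m` if all components are. -/
def IsHomogVec (ρ : Fin 3 → S3) (m : ℕ) : Prop := ∀ i, (ρ i).IsHomogeneous m

/-- `C : f = 0` is a free divisor with exponents `d₁, d₂` if `AR(f)` is a free
`S`-module with a homogeneous basis in degrees `d₁` and `d₂`. -/
def IsFreeDivisorWith (f : S3) (d₁ d₂ : ℕ) : Prop :=
  ∃ b : Module.Basis (Fin 2) S3 (AR f),
    IsHomogVec (↑(b 0)) d₁ ∧ IsHomogVec (↑(b 1)) d₂

/-- `C : f = 0` is a free divisor if `AR(f)` is a free graded `S`-module of rank two. -/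
def IsFreeDivisor (f : S3) : Prop := ∃ d₁ d₂ : ℕ, IsFreeDivisorWith f d₁ d₂

/-- `binom(a, 2)` for an integer `a`, zero when `a < 2`. -/
def chooseTwo (a : ℤ) : ℤ := (a.toNat).choose 2

/-- The Hilbert function `m(f_s)_k` of the Milnor algebra of a smooth plane curve
of degree `d`. -/
def smoothMilnorDim (d : ℕ) (k : ℤ) : ℤ :=
  chooseTwo (k + 2) - 3 * chooseTwo (k - d + 3) + 3 * chooseTwo (k - 2 * d + 4)
    - chooseTwo (k - 3 * d + 5)

/-- `m(f)_k` extended to integer indices by zero. -/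
def milnorDimZ (f : S3) (k : ℤ) : ℤ := if k < 0 then 0 else milnorDim f k.toNat

/-- `ar(f)_m` extended to integer indices by zero. -/
def arDimZ (f : S3) (m : ℤ) : ℤ := if m < 0 then 0 else arDim f m.toNat

/-- The coincidence threshold `ct(f)`. -/
def ctf (f : S3) (d : ℕ) : ℕ :=
  sSup {q : ℕ | ∀ k ≤ q, (milnorDim f k : ℤ) = smoothMilnorDim d k}

/-- The stability threshold `st(f)`. -/
def stf (f : S3) (τ : ℕ) : ℕ := sInf {q : ℕ | ∀ k ≥ q, milnorDim f k = τ}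

/-- `mdr(f)`, the minimal degree of a syzygy. -/
def mdr (f : S3) : ℕ := sInf {q : ℕ | ARgr f q ≠ ⊥}

/-- The irrelevant maximal ideal `(x,y,z)`. -/
def maxIdeal3 : Ideal S3 := Ideal.span {X 0, X 1, X 2}

/-- The saturation `I_f` of the Jacobian ideal with respect to `(x,y,z)`. -/
def satJacobian (f : S3) : Ideal S3 := ⨆ n : ℕ, (jacobianIdeal f).colon ((maxIdeal3 ^ n : Ideal S3) : Set S3)

set_option maxHeartbeats 1000000
set_option synthInstance.maxHeartbeats 400000
lemma degree_eq_card (d : Fin 3 →₀ ℕ) :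
    d.degree = Multiset.card (Finsupp.toMultiset d) := by
  rw [Finsupp.card_toMultiset]; simp [Finsupp.degree, Finsupp.sum]; rfl

/-- degree-n multiindices on Fin 3 ≃ Sym (Fin 3) n -/
def degEquivSym (n : ℕ) : {d : Fin 3 →₀ ℕ // d.degree = n} ≃ Sym (Fin 3) n where
  toFun d := ⟨Finsupp.toMultiset d.1, by rw [← degree_eq_card, d.2]⟩
  invFun s := ⟨Multiset.toFinsupp s.1, by
    rw [degree_eq_card, Multiset.toFinsupp_toMultiset]; exact s.2⟩
  left_inv d := by ext : 1; simp
  right_inv s := by ext : 1; simp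

instance degFintype (n : ℕ) : Fintype {d : Fin 3 →₀ ℕ // d.degree = n} :=
  Fintype.ofEquiv _ (degEquivSym n).symm

instance degFintype' (n : ℕ) : Finite {d : Fin 3 →₀ ℕ | d.degree = n} :=
  Finite.of_equiv _ (Equiv.refl {d : Fin 3 →₀ ℕ // d.degree = n})

lemma card_deg (n : ℕ) : Fintype.card {d : Fin 3 →₀ ℕ // d.degree = n} = (n+2).choose 2 := by
  rw [Fintype.card_congr (degEquivSym n), Sym.card_sym_eq_multichoose, Nat.multichoose_eq]
  have h3 : Fintype.card (Fin 3) = 3 := by simp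
  rw [h3]
  have : (3 + n - 1) = n + 2 := by omega
  rw [this]
  have h2 : n ≤ n + 2 := by omega
  calc (n+2).choose n = (n+2).choose (n+2-n) := by rw [Nat.choose_symm h2]
    _ = (n+2).choose 2 := by congr 1; omega

/-- the homogeneous submodule as ℂ-space -/
def hS (n : ℕ) : Submodule ℂ S3 := homogeneousSubmodule (Fin 3) ℂ n

def hSEquiv (n : ℕ) : hS n ≃ₗ[ℂ] ({d : Fin 3 →₀ ℕ // d.degree = n} → ℂ) := by
  refine (LinearEquiv.ofEq _ _ ?_).trans
    ((AddMonoidAlgebra.supportedEquivFinsupp {d : Fin 3 →₀ ℕ | d.degree = n}).trans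
      (Finsupp.linearEquivFunOnFinite ℂ ℂ _))
  exact homogeneousSubmodule_eq_finsupp_supported (Fin 3) ℂ n

instance hS_findim (n : ℕ) : FiniteDimensional ℂ (hS n) :=
  Module.Finite.equiv (hSEquiv n).symm

lemma finrank_hS (n : ℕ) : Module.finrank ℂ (hS n) = (n+2).choose 2 := by
  rw [(hSEquiv n).finrank_eq, Module.finrank_fintype_fun_eq_card, card_deg]
lemma chooseTwo_nonpos {a : ℤ} (h : a ≤ 1) : chooseTwo a = 0 := by
  have : a.toNat < 2 := by omega
  simp [chooseTwo, Nat.choose_eq_zero_of_lt this]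

lemma chooseTwo_step (a : ℤ) : chooseTwo (a+1) = chooseTwo a + max a 0 := by
  rcases le_or_gt a 0 with h | h
  · rw [chooseTwo_nonpos (by omega), chooseTwo_nonpos (by omega)]; omega
  · have h1 : (a+1).toNat = a.toNat + 1 := by omega
    have h2 : 1 ≤ a.toNat := by omega
    unfold chooseTwo
    rw [h1]
    have : (a.toNat + 1).choose 2 = a.toNat.choose 1 + a.toNat.choose 2 :=
      Nat.choose_succ_succ a.toNat 1
    rw [this, Nat.choose_one_right]
    push_cast
    omega

lemma chooseTwo_nat (n : ℕ) : chooseTwo ((n : ℤ) + 2) = (n+2).choose 2 := by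
  have h : ((n : ℤ) + 2).toNat = n + 2 := by omega
  rw [chooseTwo, h]

-- key lemma: homogeneous component of a product with homogeneous factor
lemma homogComp_mul (a h : S3) {e : ℕ} (hh : h.IsHomogeneous e) (n : ℕ) :
    homogeneousComponent n (a * h) =
      if e ≤ n then homogeneousComponent (n - e) a * h else 0 := by
  conv_lhs => rw [← sum_homogeneousComponent a, Finset.sum_mul, map_sum]
  have hterm : ∀ i, homogeneousComponent n (homogeneousComponent i a * h)
      = if n = i + e then homogeneousComponent i a * h else 0 := fun i =>
    homogeneousComponent_of_mem
      ((mem_homogeneousSubmodule _ _).2 ((homogeneousComponent_isHomogeneous i a).mul hh))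
  by_cases hen : e ≤ n
  · rw [if_pos hen]
    by_cases hr : n - e ≤ a.totalDegree
    · rw [Finset.sum_eq_single (n - e)]
      · rw [hterm, if_pos (by omega)]
      · intro i hi hne
        rw [hterm, if_neg (by omega)]
      · intro hni
        exact absurd (Finset.mem_range.2 (by omega)) hni
    · rw [Finset.sum_eq_zero, homogeneousComponent_eq_zero _ _ (by omega), zero_mul]
      intro i hi
      rw [hterm, if_neg (by rw [Finset.mem_range] at hi; omega)]
  · rw [if_neg hen, Finset.sum_eq_zero]
    intro i hi
    rw [hterm, if_neg (by omega)]

lemma homogComp_self {a : S3} {n : ℕ} (h : a.IsHomogeneous n) :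
    homogeneousComponent n a = a := by
  rw [homogeneousComponent_of_mem ((mem_homogeneousSubmodule _ _).2 h), if_pos rfl]

lemma homogComp_ne {a : S3} {m n : ℕ} (h : a.IsHomogeneous m) (hne : n ≠ m) :
    homogeneousComponent n a = 0 := by
  rw [homogeneousComponent_of_mem ((mem_homogeneousSubmodule _ _).2 h), if_neg hne]

lemma eq_zero_of_comp {a : S3} (h : ∀ j, homogeneousComponent j a = 0) : a = 0 := by
  conv_lhs => rw [← sum_homogeneousComponent a]
  exact Finset.sum_eq_zero fun i _ => h i

lemma isHomog_of_comp {a : S3} {j0 : ℕ}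
    (h : ∀ j, j ≠ j0 → homogeneousComponent j a = 0) : a.IsHomogeneous j0 := by
  by_cases hj : j0 ≤ a.totalDegree
  · have : a = homogeneousComponent j0 a := by
      conv_lhs => rw [← sum_homogeneousComponent a]
      rw [Finset.sum_eq_single j0]
      · intro i _ hne; exact h i hne
      · intro hni; exact absurd (Finset.mem_range.2 (by omega)) hni
    rw [this]; exact homogeneousComponent_isHomogeneous j0 a
  · have : a = 0 := by
      apply eq_zero_of_comp
      intro j
      by_cases hjj : j = j0
      · subst hjj; exact homogeneousComponent_eq_zero _ _ (by omega)
      · exact h j hjj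
    rw [this]; exact isHomogeneous_zero _ _ _
-- degree of finsupp on Fin 3 as full sum
lemma degree_fin (w : Fin 3 →₀ ℕ) : w.degree = ∑ j : Fin 3, w j := by
  rw [Finsupp.degree]
  apply Finset.sum_subset (Finset.subset_univ _)
  intro x _ hx
  simpa using (Finsupp.notMem_support_iff.1 hx)

lemma pderiv_isHomog {f : S3} {d : ℕ} (hf : f.IsHomogeneous d) (i : Fin 3) :
    (pderiv i f).IsHomogeneous (d - 1) := by
  conv in f => rw [← support_sum_monomial_coeff f]
  rw [map_sum]
  apply IsHomogeneous.sum
  intro u hu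
  rw [pderiv_monomial]
  by_cases hui : u i = 0
  · rw [hui]
    push_cast
    rw [mul_zero]
    rw [map_zero]
    exact isHomogeneous_zero _ _ _
  · apply isHomogeneous_monomial
    have hdu : u.degree = d := by
      by_contra hne
      exact (mem_support_iff.1 hu) (hf.coeff_eq_zero hne)
    rw [degree_fin] at hdu ⊢
    rw [← Finset.add_sum_erase _ _ (Finset.mem_univ i)] at hdu ⊢
    have h1 : (u - Finsupp.single i 1 : Fin 3 →₀ ℕ) i = u i - 1 := by
      simp [Finsupp.tsub_apply]
    have h2 : ∀ j ∈ Finset.univ.erase i, (u - Finsupp.single i 1 : Fin 3 →₀ ℕ) j = u j := by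
      intro j hj
      have hne := Finset.ne_of_mem_erase hj
      simp [Finsupp.tsub_apply, Finsupp.single_apply, (Ne.symm hne)]
    rw [h1, Finset.sum_congr rfl h2]
    have hui' : 1 ≤ u i := Nat.one_le_iff_ne_zero.2 hui
    rw [← hdu]
    exact (Nat.sub_add_comm hui').symm

lemma relMap_apply (f : S3) (ρ : Fin 3 → S3) : relMap f ρ = ∑ i, ρ i * pderiv i f := rfl

lemma relMap_single (f : S3) (i : Fin 3) : relMap f (Pi.single i 1) = pderiv i f := by
  rw [relMap_apply, Finset.sum_eq_single i (fun j _ hne => by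
    rw [Pi.single_eq_of_ne hne, zero_mul]) (fun h => absurd (Finset.mem_univ _) h)]
  rw [Pi.single_eq_same, one_mul]

lemma jac_eq_range (f : S3) : jacobianIdeal f = LinearMap.range (relMap f) := by
  apply le_antisymm
  · rw [jacobianIdeal, Ideal.span_le]
    intro g hg
    simp only [Set.mem_insert_iff, Set.mem_singleton_iff] at hg
    rcases hg with h | h | h
    · exact h ▸ ⟨Pi.single 0 1, relMap_single f 0⟩
    · exact h ▸ ⟨Pi.single 1 1, relMap_single f 1⟩
    · exact h ▸ ⟨Pi.single 2 1, relMap_single f 2⟩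
  · rintro g ⟨ρ, rfl⟩
    rw [relMap_apply]
    apply Ideal.sum_mem
    intro i _
    apply Ideal.mul_mem_left
    apply Ideal.subset_span
    fin_cases i <;> simp
-- continuation: graded pieces of the Jacobian ideal
def relMapC (f : S3) : (Fin 3 → S3) →ₗ[ℂ] S3 := (relMap f).restrictScalars ℂ

def Vm (m : ℕ) : Submodule ℂ (Fin 3 → S3) :=
  Submodule.pi Set.univ (fun _ => homogeneousSubmodule (Fin 3) ℂ m)

def Jc (f : S3) : Submodule ℂ S3 := Submodule.restrictScalars ℂ (jacobianIdeal f)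

lemma mem_Jc_iff (f : S3) (g : S3) : g ∈ Jc f ↔ ∃ ρ, relMap f ρ = g := by
  rw [Jc, Submodule.restrictScalars_mem, jac_eq_range]
  exact Iff.rfl

lemma relMapC_apply (f : S3) (ρ : Fin 3 → S3) : relMapC f ρ = ∑ i, ρ i * pderiv i f := rfl

lemma relMap_homog {f : S3} {d : ℕ} (hf : f.IsHomogeneous d) {m : ℕ} {ρ : Fin 3 → S3}
    (hρ : ρ ∈ Vm m) : relMapC f ρ ∈ hS (m + (d-1)) := by
  rw [relMapC_apply, hS, mem_homogeneousSubmodule]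
  apply IsHomogeneous.sum
  intro i _
  exact (hρ i (Set.mem_univ i)).mul (pderiv_isHomog hf i)

lemma jc_inf_hS_eq (f : S3) {d : ℕ} (hf : f.IsHomogeneous d) (m : ℕ) :
    Jc f ⊓ hS (m + (d-1)) = Submodule.map (relMapC f) (Vm m) := by
  apply le_antisymm
  · rintro g ⟨hg1, hg2⟩
    obtain ⟨ρ, hρ⟩ := (mem_Jc_iff f g).1 hg1
    refine ⟨fun i => homogeneousComponent m (ρ i), fun i _ => homogeneousComponent_isHomogeneous m (ρ i), ?_⟩
    have hgh : g.IsHomogeneous (m + (d-1)) := hg2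
    calc relMapC f (fun i => homogeneousComponent m (ρ i))
        = ∑ i, homogeneousComponent m (ρ i) * pderiv i f := rfl
      _ = ∑ i, homogeneousComponent (m + (d-1)) (ρ i * pderiv i f) := by
          apply Finset.sum_congr rfl
          intro i _
          have hmm : m + (d-1) - (d-1) = m := by omega
          rw [homogComp_mul (ρ i) (pderiv i f) (pderiv_isHomog hf i) (m + (d-1)),
            if_pos (Nat.le_add_left _ _), hmm]
      _ = homogeneousComponent (m + (d-1)) (∑ i, ρ i * pderiv i f) := by rw [map_sum]
      _ = homogeneousComponent (m + (d-1)) g := by rw [← relMap_apply, hρ]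
      _ = g := homogComp_self hgh
  · rintro g ⟨ρ, hρ1, rfl⟩
    exact ⟨(mem_Jc_iff f _).2 ⟨ρ, rfl⟩, relMap_homog hf (fun i _ => hρ1 i (Set.mem_univ i))⟩

lemma jc_inf_hS_bot (f : S3) {d : ℕ} (hf : f.IsHomogeneous d) {k : ℕ} (hk : k < d - 1) :
    Jc f ⊓ hS k = ⊥ := by
  rw [eq_bot_iff]
  rintro g ⟨hg1, hg2⟩
  obtain ⟨ρ, hρ⟩ := (mem_Jc_iff f g).1 hg1
  have hgh : g.IsHomogeneous k := hg2
  have : g = homogeneousComponent k g := (homogComp_self hgh).symm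
  rw [this, ← hρ, relMap_apply, map_sum]
  have : ∀ i ∈ Finset.univ, homogeneousComponent k (ρ i * pderiv i f) = 0 := by
    intro i _
    rw [homogComp_mul (ρ i) (pderiv i f) (pderiv_isHomog hf i) k, if_neg (by omega)]
  rw [Finset.sum_eq_zero this]
  exact Submodule.zero_mem ⊥

-- Milnor dimension via intersection with the ideal
lemma milnor_add (f : S3) (k : ℕ) :
    milnorDim f k + Module.finrank ℂ ((Jc f) ⊓ hS k : Submodule ℂ S3)
      = Module.finrank ℂ (hS k) := by
  set L := (Ideal.Quotient.mkₐ ℂ (jacobianIdeal f)).toLinearMap ∘ₗ (hS k).subtype with hL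
  have hrange : LinearMap.range L =
      Submodule.map (Ideal.Quotient.mkₐ ℂ (jacobianIdeal f)).toLinearMap
        (homogeneousSubmodule (Fin 3) ℂ k) := by
    rw [hL, LinearMap.range_comp, Submodule.range_subtype]
    rfl
  have hker : LinearMap.ker L = Submodule.comap (hS k).subtype ((Jc f) ⊓ hS k) := by
    rw [Submodule.comap_inf, Submodule.comap_subtype_self, inf_top_eq]
    ext x
    simp only [LinearMap.mem_ker, Submodule.mem_comap, hL, LinearMap.coe_comp,
      Function.comp_apply, Submodule.coe_subtype, AlgHom.toLinearMap_apply,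
      Ideal.Quotient.mkₐ_eq_mk]
    rw [Ideal.Quotient.eq_zero_iff_mem]
    exact Iff.rfl
  have := LinearMap.finrank_range_add_finrank_ker L
  rw [hrange, hker] at this
  rw [milnorDim]
  rw [← this]
  congr 1
  exact ((Submodule.comapSubtypeEquivOfLe
    (inf_le_right : Jc f ⊓ hS k ≤ hS k)).finrank_eq).symm

lemma ARgr_eq (f : S3) (m : ℕ) : ARgr f m = LinearMap.ker (relMapC f) ⊓ Vm m := rfl

def VmEquiv (m : ℕ) : (Vm m) ≃ₗ[ℂ] (Fin 3 → hS m) where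
  toFun v := fun i => ⟨v.1 i, v.2 i (Set.mem_univ i)⟩
  map_add' u v := rfl
  map_smul' c v := rfl
  invFun w := ⟨fun i => (w i).1, fun i _ => (w i).2⟩
  left_inv v := rfl
  right_inv w := rfl

instance Vm_findim (m : ℕ) : FiniteDimensional ℂ (Vm m) :=
  Module.Finite.equiv (VmEquiv m).symm

lemma finrank_Vm (m : ℕ) : Module.finrank ℂ (Vm m) = 3 * ((m+2).choose 2) := by
  rw [(VmEquiv m).finrank_eq, Module.finrank_pi_fintype, Finset.sum_const,
    Finset.card_univ, Fintype.card_fin, finrank_hS, smul_eq_mul]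

lemma ar_rank (f : S3) (m : ℕ) :
    Module.finrank ℂ (Submodule.map (relMapC f) (Vm m)) + arDim f m
      = 3 * ((m+2).choose 2) := by
  have h := LinearMap.finrank_range_add_finrank_ker ((relMapC f).domRestrict (Vm m))
  rw [LinearMap.range_domRestrict, LinearMap.ker_domRestrict, finrank_Vm] at h
  rw [← h]
  congr 1
  rw [arDim, ARgr_eq]
  have hcomap : Submodule.comap (Vm m).subtype (LinearMap.ker (relMapC f)) =
      Submodule.comap (Vm m).subtype (LinearMap.ker (relMapC f) ⊓ Vm m) := by
    rw [Submodule.comap_inf, Submodule.comap_subtype_self, inf_top_eq]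
  rw [hcomap]
  exact ((Submodule.comapSubtypeEquivOfLe
    (inf_le_right : LinearMap.ker (relMapC f) ⊓ Vm m ≤ Vm m)).finrank_eq).symm

lemma main_formula (f : S3) {d : ℕ} (hf : f.IsHomogeneous d) (hd : 1 ≤ d) (k : ℕ) :
    (milnorDim f k : ℤ) + 3 * chooseTwo ((k:ℤ) - d + 3) =
      chooseTwo ((k:ℤ)+2) + (if d - 1 ≤ k then (arDim f (k - (d-1)) : ℤ) else 0) := by
  by_cases hk : d - 1 ≤ k
  · set m := k - (d-1) with hm
    have hkm : k = m + (d-1) := by omega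
    have h1 := milnor_add f k
    rw [hkm, jc_inf_hS_eq f hf m] at h1
    have h2 := ar_rank f m
    have h3 : chooseTwo ((k:ℤ) - d + 3) = ((m+2).choose 2 : ℤ) := by
      have : (k:ℤ) - d + 3 = (m:ℤ) + 2 := by omega
      rw [this, chooseTwo_nat]
    have h4 : chooseTwo ((k:ℤ)+2) = ((k+2).choose 2 : ℤ) := by
      rw [show ((k:ℤ)+2) = ((k:ℕ):ℤ)+2 by push_cast; ring, chooseTwo_nat]
    rw [← hkm] at h1
    rw [if_pos hk, h3, h4, ← finrank_hS k]
    omega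
  · have h1 := milnor_add f k
    rw [jc_inf_hS_bot f hf (by omega : k < d - 1)] at h1
    have hbot : Module.finrank ℂ (⊥ : Submodule ℂ S3) = 0 := finrank_bot ℂ S3
    have h3 : chooseTwo ((k:ℤ) - d + 3) = 0 := chooseTwo_nonpos (by omega)
    have h4 : chooseTwo ((k:ℤ)+2) = ((k+2).choose 2 : ℤ) := by
      rw [show ((k:ℤ)+2) = ((k:ℕ):ℤ)+2 by push_cast; ring, chooseTwo_nat]
    rw [if_neg hk, h3, h4]
    have h5 := finrank_hS k
    omega

/-- degree-`j` piece for integer `j` (⊥ for negative). -/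
def Hd (j : ℤ) : Submodule ℂ S3 := if 0 ≤ j then hS j.toNat else ⊥

instance Hd_findim (j : ℤ) : FiniteDimensional ℂ (Hd j) := by
  by_cases h : 0 ≤ j
  · rw [Hd, if_pos h]; infer_instance
  · rw [Hd, if_neg h]; infer_instance

lemma finrank_Hd (j : ℤ) : (Module.finrank ℂ (Hd j) : ℤ) = chooseTwo (j + 2) := by
  by_cases h : 0 ≤ j
  · rw [Hd, if_pos h, finrank_hS]
    rw [show j + 2 = ((j.toNat : ℕ) : ℤ) + 2 by omega, chooseTwo_nat]
  · rw [Hd, if_neg h, chooseTwo_nonpos (by omega)]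
    simp

lemma mem_Hd_mul {a : S3} {j : ℤ} (ha : a ∈ Hd j) {h : S3} {e m : ℕ}
    (hh : h.IsHomogeneous e) (hm : j + e = m) : (a * h).IsHomogeneous m := by
  by_cases h0 : 0 ≤ j
  · rw [Hd, if_pos h0] at ha
    have hje : j.toNat + e = m := by omega
    rw [← hje]
    exact (ha : a.IsHomogeneous j.toNat).mul hh
  · rw [Hd, if_neg h0, Submodule.mem_bot] at ha
    rw [ha, zero_mul]
    exact isHomogeneous_zero _ _ _

lemma mem_Hd_of_components {a : S3} {j : ℤ}
    (h : ∀ n : ℕ, (n:ℤ) ≠ j → homogeneousComponent n a = 0) : a ∈ Hd j := by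
  by_cases h0 : 0 ≤ j
  · rw [Hd, if_pos h0]
    show a ∈ hS j.toNat
    rw [hS, mem_homogeneousSubmodule]
    apply isHomog_of_comp
    intro n hn
    exact h n (by omega)
  · rw [Hd, if_neg h0, Submodule.mem_bot]
    exact eq_zero_of_comp fun n => h n (by omega)

section Free
variable {f : S3} {d₁ d₂ : ℕ} (b : Module.Basis (Fin 2) S3 (AR f))

lemma indep_pair (a c : S3)
    (h : ∀ i, a * (b 0 : Fin 3 → S3) i + c * (b 1 : Fin 3 → S3) i = 0) :
    a = 0 ∧ c = 0 := by
  have hsum : a • (b 0) + c • (b 1) = (0 : AR f) := by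
    apply Subtype.ext
    funext i
    simpa using h i
  have hli := Fintype.linearIndependent_iff.1 b.linearIndependent ![a, c]
  have hs : ∑ i : Fin 2, (![a, c] : Fin 2 → S3) i • b i = 0 := by
    rw [Fin.sum_univ_two]
    simpa using hsum
  exact ⟨hli hs 0, hli hs 1⟩

lemma repr_pair {ρ : Fin 3 → S3} (hρ : ρ ∈ AR f) :
    ∃ a c : S3, ∀ i, a * (b 0 : Fin 3 → S3) i + c * (b 1 : Fin 3 → S3) i = ρ i := by
  set ρ' : AR f := ⟨ρ, hρ⟩ with hρ'
  refine ⟨b.repr ρ' 0, b.repr ρ' 1, fun i => ?_⟩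
  have := b.sum_repr ρ'
  rw [Fin.sum_univ_two] at this
  have hv := congrArg (Subtype.val) this
  have := congrFun hv i
  simpa using this

variable (hb0 : IsHomogVec (↑(b 0)) d₁) (hb1 : IsHomogVec (↑(b 1)) d₂)

include hb0 hb1 in
lemma comp_vanish {m : ℕ} {ρ : Fin 3 → S3} (hρk : ρ ∈ LinearMap.ker (relMapC f))
    (hρh : ∀ i, (ρ i).IsHomogeneous m) :
    ∃ a c : S3, a ∈ Hd ((m:ℤ) - d₁) ∧ c ∈ Hd ((m:ℤ) - d₂) ∧
      ∀ i, a * (b 0 : Fin 3 → S3) i + c * (b 1 : Fin 3 → S3) i = ρ i := by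
  have hρAR : ρ ∈ AR f := by
    rw [AR, LinearMap.mem_ker]
    exact hρk
  obtain ⟨a, c, hrep⟩ := repr_pair b hρAR
  have key : ∀ n : ℕ, n ≠ m →
      homogeneousComponent (n) a = 0 ∧ homogeneousComponent (n) c = 0 → True := fun _ _ _ => trivial
  -- component extraction
  have hcomp : ∀ N : ℕ, N ≠ m → ∀ i,
      (if d₁ ≤ N then homogeneousComponent (N - d₁) a else 0) * (b 0 : Fin 3 → S3) i +
      (if d₂ ≤ N then homogeneousComponent (N - d₂) c else 0) * (b 1 : Fin 3 → S3) i = 0 := by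
    intro N hN i
    have h1 : homogeneousComponent N (a * (b 0 : Fin 3 → S3) i) =
        (if d₁ ≤ N then homogeneousComponent (N - d₁) a else 0) * (b 0 : Fin 3 → S3) i := by
      rw [homogComp_mul a _ (hb0 i) N]
      split <;> simp
    have h2 : homogeneousComponent N (c * (b 1 : Fin 3 → S3) i) =
        (if d₂ ≤ N then homogeneousComponent (N - d₂) c else 0) * (b 1 : Fin 3 → S3) i := by
      rw [homogComp_mul c _ (hb1 i) N]
      split <;> simp
    rw [← h1, ← h2, ← map_add, hrep i]
    exact homogComp_ne (hρh i) hN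
  have hA : ∀ N : ℕ, N ≠ m → (if d₁ ≤ N then homogeneousComponent (N - d₁) a else 0) = 0 ∧
      (if d₂ ≤ N then homogeneousComponent (N - d₂) c else 0) = 0 := fun N hN =>
    indep_pair b _ _ (hcomp N hN)
  refine ⟨a, c, ?_, ?_, hrep⟩
  · apply mem_Hd_of_components
    intro n hn
    have h := (hA (n + d₁) (by omega)).1
    rw [if_pos (by omega)] at h
    simpa using h
  · apply mem_Hd_of_components
    intro n hn
    have h := (hA (n + d₂) (by omega)).2
    rw [if_pos (by omega)] at h
    simpa using h

/-- the pairing map `(a,c) ↦ a·b₀ + c·b₁` as a `ℂ`-linear map. -/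
def pairMap : (S3 × S3) →ₗ[ℂ] (Fin 3 → S3) where
  toFun p := fun i => p.1 * (b 0 : Fin 3 → S3) i + p.2 * (b 1 : Fin 3 → S3) i
  map_add' p q := by
    funext i
    simp only [Prod.fst_add, Prod.snd_add, add_mul, Pi.add_apply]
    ring
  map_smul' r p := by
    funext i
    simp only [Prod.smul_fst, Prod.smul_snd, RingHom.id_apply, Pi.smul_apply,
      smul_mul_assoc, smul_add]

include hb0 hb1 in
lemma pairMap_mem (m : ℕ) (p : S3 × S3) (h1 : p.1 ∈ Hd ((m:ℤ) - d₁))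
    (h2 : p.2 ∈ Hd ((m:ℤ) - d₂)) : pairMap b p ∈ ARgr f m := by
  constructor
  · show pairMap b p ∈ LinearMap.ker (relMapC f)
    rw [LinearMap.mem_ker, relMapC_apply]
    have hb0k : ∑ i, (b 0 : Fin 3 → S3) i * pderiv i f = 0 := (b 0).2
    have hb1k : ∑ i, (b 1 : Fin 3 → S3) i * pderiv i f = 0 := (b 1).2
    calc ∑ i, (pairMap b p) i * pderiv i f
        = p.1 * (∑ i, (b 0 : Fin 3 → S3) i * pderiv i f)
          + p.2 * (∑ i, (b 1 : Fin 3 → S3) i * pderiv i f) := by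
          rw [Finset.mul_sum, Finset.mul_sum, ← Finset.sum_add_distrib]
          apply Finset.sum_congr rfl
          intro i _
          show (p.1 * (b 0 : Fin 3 → S3) i + p.2 * (b 1 : Fin 3 → S3) i) * pderiv i f = _
          ring
      _ = 0 := by rw [hb0k, hb1k, mul_zero, mul_zero, add_zero]
  · intro i _
    show (p.1 * (b 0 : Fin 3 → S3) i + p.2 * (b 1 : Fin 3 → S3) i) ∈
      homogeneousSubmodule (Fin 3) ℂ m
    rw [mem_homogeneousSubmodule]
    exact (mem_Hd_mul h1 (hb0 i) (by omega)).add (mem_Hd_mul h2 (hb1 i) (by omega))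

include hb0 hb1 in
lemma arDim_formula (m : ℕ) :
    (arDim f m : ℤ) = chooseTwo ((m:ℤ) - d₁ + 2) + chooseTwo ((m:ℤ) - d₂ + 2) := by
  set L : (Hd ((m:ℤ) - d₁) × Hd ((m:ℤ) - d₂)) →ₗ[ℂ] (Fin 3 → S3) :=
    (pairMap b).comp ((Hd ((m:ℤ) - d₁)).subtype.prodMap ((Hd ((m:ℤ) - d₂)).subtype)) with hL
  have hmem : ∀ p, L p ∈ ARgr f m := by
    rintro ⟨⟨a, ha⟩, ⟨c, hc⟩⟩
    exact pairMap_mem b hb0 hb1 m ⟨a, c⟩ ha hc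
  set Ψ := LinearMap.codRestrict (ARgr f m) L hmem with hΨ
  have hbij : Function.Bijective Ψ := by
    constructor
    · rintro ⟨⟨a, ha⟩, ⟨c, hc⟩⟩ ⟨⟨a', ha'⟩, ⟨c', hc'⟩⟩ hpq
      have h0 : ∀ i, a * (b 0 : Fin 3 → S3) i + c * (b 1 : Fin 3 → S3) i
          = a' * (b 0 : Fin 3 → S3) i + c' * (b 1 : Fin 3 → S3) i :=
        fun i => congrFun (congrArg Subtype.val hpq) i
      have hz : ∀ i, (a - a') * (b 0 : Fin 3 → S3) i + (c - c') * (b 1 : Fin 3 → S3) i = 0 := by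
        intro i
        rw [sub_mul, sub_mul, sub_add_sub_comm, sub_eq_zero]
        exact h0 i
      obtain ⟨h1, h2⟩ := indep_pair b _ _ hz
      have e1 : a = a' := sub_eq_zero.1 h1
      have e2 : c = c' := sub_eq_zero.1 h2
      subst e1; subst e2; rfl
    · rintro ⟨ρ, hρ⟩
      obtain ⟨a, c, ha, hc, hrep⟩ := comp_vanish b hb0 hb1 hρ.1 (fun i => hρ.2 i (Set.mem_univ i))
      refine ⟨⟨⟨a, ha⟩, ⟨c, hc⟩⟩, ?_⟩
      apply Subtype.ext
      funext i
      exact hrep i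
  have heq := (LinearEquiv.ofBijective Ψ hbij).finrank_eq
  rw [arDim, ← heq, Module.finrank_prod]
  push_cast
  rw [finrank_Hd, finrank_Hd]
end Free

lemma chooseTwo_nonneg (a : ℤ) : 0 ≤ chooseTwo a := Int.natCast_nonneg _

section Closed
variable {f : S3} {d d₁ d₂ : ℕ} (b : Module.Basis (Fin 2) S3 (AR f))
variable (hf : f.IsHomogeneous d) (hd : 1 ≤ d)
variable (hb0 : IsHomogVec (↑(b 0)) d₁) (hb1 : IsHomogVec (↑(b 1)) d₂)

include hf hd hb0 hb1 in
lemma milnor_closed (k : ℕ) :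
    (milnorDim f k : ℤ) = chooseTwo ((k:ℤ)+2) - 3 * chooseTwo ((k:ℤ) - d + 3)
      + chooseTwo ((k:ℤ) - d - d₁ + 3) + chooseTwo ((k:ℤ) - d - d₂ + 3) := by
  have hmain := main_formula f hf hd k
  by_cases hk : d - 1 ≤ k
  · rw [if_pos hk] at hmain
    have har := arDim_formula b hb0 hb1 (k - (d-1))
    have hc1 : ((k - (d-1) : ℕ) : ℤ) - d₁ + 2 = (k:ℤ) - d - d₁ + 3 := by omega
    have hc2 : ((k - (d-1) : ℕ) : ℤ) - d₂ + 2 = (k:ℤ) - d - d₂ + 3 := by omega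
    rw [hc1, hc2] at har
    omega
  · rw [if_neg hk] at hmain
    have hz1 : chooseTwo ((k:ℤ) - d - d₁ + 3) = 0 := chooseTwo_nonpos (by omega)
    have hz2 : chooseTwo ((k:ℤ) - d - d₂ + 3) = 0 := chooseTwo_nonpos (by omega)
    omega

include hf hd hb0 hb1 in
lemma milnor_step (k : ℕ) :
    (milnorDim f (k+1) : ℤ) = (milnorDim f k : ℤ)
      + (max ((k:ℤ)+2) 0 - 3 * max ((k:ℤ) - d + 3) 0
        + max ((k:ℤ) - d - d₁ + 3) 0 + max ((k:ℤ) - d - d₂ + 3) 0) := by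
  have h1 := milnor_closed b hf hd hb0 hb1 k
  have h2 := milnor_closed b hf hd hb0 hb1 (k+1)
  have hcast : ((k+1 : ℕ) : ℤ) = (k:ℤ) + 1 := by push_cast; ring
  rw [hcast] at h2
  have s1 : chooseTwo ((k:ℤ)+1+2) = chooseTwo ((k:ℤ)+2) + max ((k:ℤ)+2) 0 := by
    rw [show (k:ℤ)+1+2 = ((k:ℤ)+2)+1 by ring, chooseTwo_step]
  have s2 : chooseTwo ((k:ℤ)+1-d+3) = chooseTwo ((k:ℤ)-d+3) + max ((k:ℤ)-d+3) 0 := by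
    rw [show (k:ℤ)+1-d+3 = ((k:ℤ)-d+3)+1 by ring, chooseTwo_step]
  have s3 : chooseTwo ((k:ℤ)+1-d-d₁+3) = chooseTwo ((k:ℤ)-d-d₁+3) + max ((k:ℤ)-d-d₁+3) 0 := by
    rw [show (k:ℤ)+1-d-d₁+3 = ((k:ℤ)-d-d₁+3)+1 by ring, chooseTwo_step]
  have s4 : chooseTwo ((k:ℤ)+1-d-d₂+3) = chooseTwo ((k:ℤ)-d-d₂+3) + max ((k:ℤ)-d-d₂+3) 0 := by
    rw [show (k:ℤ)+1-d-d₂+3 = ((k:ℤ)-d-d₂+3)+1 by ring, chooseTwo_step]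
  rw [s1, s2, s3, s4] at h2
  omega
end Closed

lemma pderiv_zero0 {f : S3} (hf : f.IsHomogeneous 0) (i : Fin 3) : pderiv i f = 0 := by
  have ht : f.totalDegree = 0 := (totalDegree_zero_iff_isHomogeneous _).2 hf
  have h2 := (totalDegree_eq_zero_iff _ f).1 ht
  conv_lhs => rw [← support_sum_monomial_coeff f]
  rw [map_sum]
  apply Finset.sum_eq_zero
  intro u hu
  rw [pderiv_monomial, h2 u hu i]
  push_cast
  rw [mul_zero]
  exact map_zero _

lemma milnor_d0 {f : S3} (hz : ∀ i, pderiv i f = 0) (k : ℕ) :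
    milnorDim f k = (k+2).choose 2 := by
  have hJ : Jc f ⊓ hS k = ⊥ := by
    rw [eq_bot_iff]
    rintro g ⟨hg1, _⟩
    obtain ⟨ρ, hρ⟩ := (mem_Jc_iff f g).1 hg1
    rw [relMap_apply] at hρ
    simp only [hz, mul_zero, Finset.sum_const_zero] at hρ
    rw [Submodule.mem_bot]
    exact hρ.symm
  have h := milnor_add f k
  rw [hJ, finrank_bot, finrank_hS] at h
  omega

lemma ARgr_le_Vm (f : S3) (m : ℕ) : ARgr f m ≤ Vm m := by
  rw [ARgr_eq]; exact inf_le_right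

instance ARgr_findim (f : S3) (m : ℕ) : FiniteDimensional ℂ (ARgr f m) :=
  Submodule.finiteDimensional_of_le (ARgr_le_Vm f m)


theorem stmt5 (f : S3) (d : ℕ) (hf : f.IsHomogeneous d) (hred : Squarefree f)
    (d₁ d₂ : ℕ) (hfree : IsFreeDivisorWith f d₁ d₂) (h12 : d₁ ≤ d₂) (hpencil : 1 ≤ d₁)
    (τ : ℕ) (hτ : ∃ N : ℕ, ∀ k ≥ N, milnorDim f k = τ) :
    mdr f = d₁ ∧ (ctf f d : ℤ) = (d : ℤ) + d₁ - 2 ∧ (stf f τ : ℤ) = (d : ℤ) + d₂ - 3 := by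
  classical
  obtain ⟨b, hb0, hb1⟩ := hfree
  obtain ⟨N, hN⟩ := hτ
  -- the degree is positive
  have hd : 1 ≤ d := by
    by_contra hd0
    have h0 : d = 0 := by omega
    subst h0
    have h1 := hN N (le_refl N)
    have h2 := hN (N+1) (by omega)
    rw [milnor_d0 (pderiv_zero0 hf)] at h1 h2
    have h2' : (N+3).choose 2 = τ := by
      rw [show N+3 = N+1+2 by omega]
      exact h2
    have h3 : (N+3).choose 2 = (N+2).choose 1 + (N+2).choose 2 :=
      Nat.choose_succ_succ (N+2) 1
    have h4 : (N+2).choose 1 = N+2 := Nat.choose_one_right _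
    omega
  -- sum of exponents
  have hsum : (d₁:ℤ) + d₂ = (d:ℤ) - 1 := by
    set K := N + d + d₁ + d₂ + 5 with hK
    have h1 := hN K (by omega)
    have h2 := hN (K+1) (by omega)
    have hstep := milnor_step b hf hd hb0 hb1 K
    rw [h1, h2] at hstep
    have hKz : (N:ℤ) + d + d₁ + d₂ + 5 = (K:ℤ) := by rw [hK]; push_cast; ring
    omega
  have hd3 : 3 ≤ d := by omega
  -- Part 1 : mdr f = d₁
  have hd₁mem : ARgr f d₁ ≠ ⊥ := by
    intro hbot
    have hmem : (↑(b 0) : Fin 3 → S3) ∈ ARgr f d₁ := ⟨(b 0).2, fun i _ => hb0 i⟩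
    rw [hbot, Submodule.mem_bot] at hmem
    exact b.ne_zero 0 (ZeroMemClass.coe_eq_zero.1 hmem)
  have hmdr : mdr f = d₁ := by
    rw [mdr]
    apply le_antisymm
    · exact Nat.sInf_le hd₁mem
    · apply le_csInf ⟨d₁, hd₁mem⟩
      intro q hq
      by_contra hlt
      apply hq
      have har := arDim_formula b hb0 hb1 q
      have z1 : chooseTwo ((q:ℤ) - d₁ + 2) = 0 := chooseTwo_nonpos (by omega)
      have z2 : chooseTwo ((q:ℤ) - d₂ + 2) = 0 := chooseTwo_nonpos (by omega)
      have hz : arDim f q = 0 := by omega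
      exact Submodule.finrank_eq_zero.1 hz
  refine ⟨hmdr, ?_, ?_⟩
  -- Part 2 : ctf
  · have hQ : {q : ℕ | ∀ k ≤ q, (milnorDim f k : ℤ) = smoothMilnorDim d k}
        = Set.Iic (d + d₁ - 2) := by
      ext q
      simp only [Set.mem_setOf_eq, Set.mem_Iic]
      constructor
      · intro h
        by_contra hq
        have heq := h (d + d₁ - 1) (by omega)
        have e := milnor_closed b hf hd hb0 hb1 (d + d₁ - 1)
        have hcast : ((d + d₁ - 1 : ℕ) : ℤ) = (d:ℤ) + d₁ - 1 := by omega
        rw [hcast] at e heq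
        have hx : chooseTwo ((d:ℤ) + d₁ - 1 - d - d₁ + 3) = 1 := by
          rw [show (d:ℤ) + d₁ - 1 - d - d₁ + 3 = 2 by ring]
          rfl
        have hpos := chooseTwo_nonneg ((d:ℤ) + d₁ - 1 - d - d₂ + 3)
        have z3 : chooseTwo ((d:ℤ) + d₁ - 1 - 2*d + 4) = 0 := chooseTwo_nonpos (by omega)
        have z4 : chooseTwo ((d:ℤ) + d₁ - 1 - 3*d + 5) = 0 := chooseTwo_nonpos (by omega)
        rw [smoothMilnorDim] at heq
        omega
      · intro hq k hk
        have e := milnor_closed b hf hd hb0 hb1 k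
        have z1 : chooseTwo ((k:ℤ) - d - d₁ + 3) = 0 := chooseTwo_nonpos (by omega)
        have z2 : chooseTwo ((k:ℤ) - d - d₂ + 3) = 0 := chooseTwo_nonpos (by omega)
        have z3 : chooseTwo ((k:ℤ) - 2*d + 4) = 0 := chooseTwo_nonpos (by omega)
        have z4 : chooseTwo ((k:ℤ) - 3*d + 5) = 0 := chooseTwo_nonpos (by omega)
        rw [smoothMilnorDim]
        omega
    rw [ctf, hQ, csSup_Iic]
    omega
  -- Part 3 : stf
  · set q₀ := d + d₂ - 3 with hq₀
    have hconst : ∀ k, q₀ ≤ k → milnorDim f k = milnorDim f q₀ := by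
      intro k hk
      induction k, hk using Nat.le_induction with
      | base => rfl
      | succ k hk ih =>
        have hstep := milnor_step b hf hd hb0 hb1 k
        have : (milnorDim f (k+1) : ℤ) = milnorDim f k := by omega
        omega
    have hτq : milnorDim f q₀ = τ := by
      have h1 := hN (max N q₀) (le_max_left _ _)
      have h2 := hconst (max N q₀) (le_max_right _ _)
      omega
    have hmem : q₀ ∈ {q : ℕ | ∀ k ≥ q, milnorDim f k = τ} := by
      intro k hk
      rw [hconst k hk, hτq]
    have hne : milnorDim f (q₀ - 1) ≠ τ := by
      have hstep := milnor_step b hf hd hb0 hb1 (q₀ - 1)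
      have hq1 : q₀ - 1 + 1 = q₀ := by omega
      rw [hq1] at hstep
      rw [hτq] at hstep
      omega
    have hst : stf f τ = q₀ := by
      rw [stf]
      apply le_antisymm (Nat.sInf_le hmem)
      apply le_csInf ⟨q₀, hmem⟩
      intro q hq
      by_contra hlt
      exact hne (hq (q₀ - 1) (by omega))
    rw [hst]
    omega

end
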